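/- The subtype relation ≤ on union-intersection types coincides with the structural relation ≤₂ defined by: ⋃_{i∈I} S_i ≤₂ ⋃_{j∈J} S'_j iff there is a function f : I → J with S_i ≤₂ S'_{f(i)} for all i; ⋂_{i∈I} R_i ≤₂ ⋂_{j∈J} R'_j iff there is a function f : J → I with R_{f(j)} ≤₂ R'_j for all j; α ≤₂ α for atomic α; and S→T ≤₂ S'→T' iff S' ≤₂ S and T ≤₂ T'. -/

import Mathlib

/-! ## Union-intersection types -/

mutual
/-- Raw types `R ::= α | S → T`. -/
inductive RawTy : Type
  | atom : ℕ → RawTy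
  | arrow : STy → TTy → RawTy
/-- Subsidiary types: finite formal intersections of raw types
    (the empty intersection is ω). -/
inductive STy : Type
  | inter : List RawTy → STy
/-- Types: finite formal unions of subsidiary types
    (the empty union is Ʊ). -/
inductive TTy : Type
  | union : List STy → TTy
end

/-- A subsidiary type regarded as a type (a singleton union). -/
def STy.toT (S : STy) : TTy := .union [S]
/-- A raw type regarded as a subsidiary type (a singleton intersection). -/
def RawTy.toS (R : RawTy) : STy := .inter [R]

/-- ω, the empty intersection. -/
def STy.omega : STy := .inter []
/-- Ʊ, the empty union. -/
def TTy.agemo : TTy := .union []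

mutual
/-- The subtype relation on raw types. -/
inductive SubR : RawTy → RawTy → Prop
  | atom (a : ℕ) : SubR (.atom a) (.atom a)
  | arrow {S S' T T'} : SubS S' S → SubT T T' → SubR (.arrow S T) (.arrow S' T')
/-- The subtype relation on subsidiary types.  Intersections are taken up to
    associativity and commutativity; `weaken` is the projection rule
    `S ≤ S' ⟹ S ∩ S'' ≤ S'` and `pair` the pairing rule. -/
inductive SubS : STy → STy → Prop
  | ofRaw {R R'} : SubR R R' → SubS (.inter [R]) (.inter [R'])
  | weaken {l l' : List RawTy} {S'} : SubS (.inter l) S' → l.Subperm l' →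
      SubS (.inter l') S'
  | pair {S} {l' : List RawTy} : (∀ R' ∈ l', SubS S (.inter [R'])) →
      SubS S (.inter l')
/-- The subtype relation on types.  `widen` is the injection rule
    `T ≤ T' ⟹ T ≤ T'' ∪ T'` and `copair` the copairing rule. -/
inductive SubT : TTy → TTy → Prop
  | ofS {S S'} : SubS S S' → SubT (.union [S]) (.union [S'])
  | widen {T} {l l' : List STy} : SubT T (.union l) → l.Subperm l' →
      SubT T (.union l')
  | copair {l : List STy} {T} : (∀ S ∈ l, SubT (.union [S]) T) →
      SubT (.union l) T
end

mutual
/-- The structural relation ≤₂ on raw types. -/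
inductive Sub2R : RawTy → RawTy → Prop
  | atom (a : ℕ) : Sub2R (.atom a) (.atom a)
  | arrow {S S' T T'} : Sub2S S' S → Sub2T T T' → Sub2R (.arrow S T) (.arrow S' T')
/-- ≤₂ on subsidiary types: ⋂_{i∈I} R_i ≤₂ ⋂_{j∈J} R'_j iff there is
    f : J → I with R_{f(j)} ≤₂ R'_j for all j. -/
inductive Sub2S : STy → STy → Prop
  | intro {l l' : List RawTy} (f : Fin l'.length → Fin l.length)
      (h : ∀ j : Fin l'.length, Sub2R (l.get (f j)) (l'.get j)) :
      Sub2S (.inter l) (.inter l')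
/-- ≤₂ on types: ⋃_{i∈I} S_i ≤₂ ⋃_{j∈J} S'_j iff there is f : I → J with
    S_i ≤₂ S'_{f(i)} for all i. -/
inductive Sub2T : TTy → TTy → Prop
  | intro {l l' : List STy} (f : Fin l.length → Fin l'.length)
      (h : ∀ i : Fin l.length, Sub2S (l.get i) (l'.get (f i))) :
      Sub2T (.union l) (.union l')
end


/-- Auxiliary lemmas -/

lemma sub2S_iff {l l' : List RawTy} :
    Sub2S (.inter l) (.inter l') ↔
      ∀ j : Fin l'.length, ∃ i : Fin l.length, Sub2R (l.get i) (l'.get j) := by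
  constructor
  · rintro ⟨f, h⟩ j; exact ⟨f j, h j⟩
  · intro h
    choose f hf using h
    exact ⟨f, hf⟩

lemma sub2T_iff {l l' : List STy} :
    Sub2T (.union l) (.union l') ↔
      ∀ i : Fin l.length, ∃ j : Fin l'.length, Sub2S (l.get i) (l'.get j) := by
  constructor
  · rintro ⟨f, h⟩ i; exact ⟨f i, h i⟩
  · intro h
    choose f hf using h
    exact ⟨f, hf⟩

lemma sub2S_ofRaw {R R' : RawTy} (h : Sub2R R R') :
    Sub2S (.inter [R]) (.inter [R']) := by
  rw [sub2S_iff]; intro j; exact ⟨⟨0, by simp⟩, by simpa using h⟩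

lemma sub2T_ofS {S S' : STy} (h : Sub2S S S') :
    Sub2T (.union [S]) (.union [S']) := by
  rw [sub2T_iff]; intro i; exact ⟨⟨0, by simp⟩, by simpa using h⟩

lemma sub2S_weaken {l l' : List RawTy} {S'} (h : Sub2S (.inter l) S')
    (hp : l.Subperm l') : Sub2S (.inter l') S' := by
  obtain ⟨m⟩ := S'
  rw [sub2S_iff] at h ⊢
  intro j
  obtain ⟨i, hi⟩ := h j
  have : l.get i ∈ l' := hp.subset (l.get_mem i)
  obtain ⟨i', hi'⟩ := List.mem_iff_get.mp this
  exact ⟨i', by rw [hi']; exact hi⟩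

lemma sub2T_widen {T} {l l' : List STy} (h : Sub2T T (.union l))
    (hp : l.Subperm l') : Sub2T T (.union l') := by
  obtain ⟨m⟩ := T
  rw [sub2T_iff] at h ⊢
  intro i
  obtain ⟨j, hj⟩ := h i
  have : l.get j ∈ l' := hp.subset (l.get_mem j)
  obtain ⟨j', hj'⟩ := List.mem_iff_get.mp this
  exact ⟨j', by rw [hj']; exact hj⟩

lemma sub2S_pair {S} {l' : List RawTy} (h : ∀ R' ∈ l', Sub2S S (.inter [R'])) :
    Sub2S S (.inter l') := by
  obtain ⟨l⟩ := S
  rw [sub2S_iff]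
  intro j
  have := h (l'.get j) (l'.get_mem j)
  rw [sub2S_iff] at this
  obtain ⟨i, hi⟩ := this ⟨0, by simp⟩
  exact ⟨i, by simpa using hi⟩

lemma sub2T_copair {l : List STy} {T} (h : ∀ S ∈ l, Sub2T (.union [S]) T) :
    Sub2T (.union l) T := by
  obtain ⟨m⟩ := T
  rw [sub2T_iff]
  intro i
  have := h (l.get i) (l.get_mem i)
  rw [sub2T_iff] at this
  obtain ⟨j, hj⟩ := this ⟨0, by simp⟩
  exact ⟨j, by simpa using hj⟩

theorem fwdR {X X' : RawTy} (h : SubR X X') : Sub2R X X' :=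
  @SubR.rec (fun R R' _ => Sub2R R R') (fun S S' _ => Sub2S S S') (fun T T' _ => Sub2T T T')
    (fun a => .atom a)
    (fun _ _ ih1 ih2 => .arrow ih1 ih2)
    (fun _ ih => sub2S_ofRaw ih)
    (fun _ hp ih => sub2S_weaken ih hp)
    (fun _ ih => sub2S_pair ih)
    (fun _ ih => sub2T_ofS ih)
    (fun _ hp ih => sub2T_widen ih hp)
    (fun _ ih => sub2T_copair ih)
    X X' h

theorem fwdS {X X' : STy} (h : SubS X X') : Sub2S X X' :=
  @SubS.rec (fun R R' _ => Sub2R R R') (fun S S' _ => Sub2S S S') (fun T T' _ => Sub2T T T')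
    (fun a => .atom a)
    (fun _ _ ih1 ih2 => .arrow ih1 ih2)
    (fun _ ih => sub2S_ofRaw ih)
    (fun _ hp ih => sub2S_weaken ih hp)
    (fun _ ih => sub2S_pair ih)
    (fun _ ih => sub2T_ofS ih)
    (fun _ hp ih => sub2T_widen ih hp)
    (fun _ ih => sub2T_copair ih)
    X X' h

theorem fwdT {X X' : TTy} (h : SubT X X') : Sub2T X X' :=
  @SubT.rec (fun R R' _ => Sub2R R R') (fun S S' _ => Sub2S S S') (fun T T' _ => Sub2T T T')
    (fun a => .atom a)
    (fun _ _ ih1 ih2 => .arrow ih1 ih2)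
    (fun _ ih => sub2S_ofRaw ih)
    (fun _ hp ih => sub2S_weaken ih hp)
    (fun _ ih => sub2S_pair ih)
    (fun _ ih => sub2T_ofS ih)
    (fun _ hp ih => sub2T_widen ih hp)
    (fun _ ih => sub2T_copair ih)
    X X' h



lemma subS_of_forall {l l' : List RawTy}
    (h : ∀ j : Fin l'.length, ∃ i : Fin l.length, SubR (l.get i) (l'.get j)) :
    SubS (.inter l) (.inter l') := by
  apply SubS.pair
  intro R' hR'
  obtain ⟨j, hj⟩ := List.mem_iff_get.mp hR'
  obtain ⟨i, hi⟩ := h j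
  rw [← hj]
  refine SubS.weaken (SubS.ofRaw hi) ?_
  exact (List.singleton_sublist.mpr (l.get_mem i)).subperm

lemma subT_of_forall {l l' : List STy}
    (h : ∀ i : Fin l.length, ∃ j : Fin l'.length, SubS (l.get i) (l'.get j)) :
    SubT (.union l) (.union l') := by
  apply SubT.copair
  intro S hS
  obtain ⟨i, hi⟩ := List.mem_iff_get.mp hS
  obtain ⟨j, hj⟩ := h i
  rw [← hi]
  refine SubT.widen (SubT.ofS hj) ?_
  exact (List.singleton_sublist.mpr (l'.get_mem j)).subperm

theorem bwdR {X X' : RawTy} (h : Sub2R X X') : SubR X X' :=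
  @Sub2R.rec (fun R R' _ => SubR R R') (fun S S' _ => SubS S S') (fun T T' _ => SubT T T')
    (fun a => .atom a)
    (fun _ _ ih1 ih2 => .arrow ih1 ih2)
    (fun f _ ih => subS_of_forall (fun j => ⟨f j, ih j⟩))
    (fun f _ ih => subT_of_forall (fun i => ⟨f i, ih i⟩))
    X X' h

theorem bwdS {X X' : STy} (h : Sub2S X X') : SubS X X' :=
  @Sub2S.rec (fun R R' _ => SubR R R') (fun S S' _ => SubS S S') (fun T T' _ => SubT T T')
    (fun a => .atom a)
    (fun _ _ ih1 ih2 => .arrow ih1 ih2)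
    (fun f _ ih => subS_of_forall (fun j => ⟨f j, ih j⟩))
    (fun f _ ih => subT_of_forall (fun i => ⟨f i, ih i⟩))
    X X' h

theorem bwdT {X X' : TTy} (h : Sub2T X X') : SubT X X' :=
  @Sub2T.rec (fun R R' _ => SubR R R') (fun S S' _ => SubS S S') (fun T T' _ => SubT T T')
    (fun a => .atom a)
    (fun _ _ ih1 ih2 => .arrow ih1 ih2)
    (fun f _ ih => subS_of_forall (fun j => ⟨f j, ih j⟩))
    (fun f _ ih => subT_of_forall (fun i => ⟨f i, ih i⟩))
    X X' h



/-- The subtype relation ≤ coincides with the structural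
relation ≤₂, at all three levels. -/
theorem sub_eq_sub2 :
    (∀ T T' : TTy, SubT T T' ↔ Sub2T T T') ∧
    (∀ S S' : STy, SubS S S' ↔ Sub2S S S') ∧
    (∀ R R' : RawTy, SubR R R' ↔ Sub2R R R') := by
  exact ⟨fun T T' => ⟨fwdT, bwdT⟩, fun S S' => ⟨fwdS, bwdS⟩, fun R R' => ⟨fwdR, bwdR⟩⟩
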